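/- Let q be an odd prime power, F a finite field with exactly q elements, K an algebraic closure of F, and a ∈ F. Let χ denote the quadratic character of F (so χ(t) = 1 if t is a nonzero square, χ(t) = −1 if t is a nonsquare, and χ(0) = 0). Then the set of pairs (x, y) ∈ K × K satisfying y² = x^q − x, x^q + a = x (with a viewed in K via the inclusion F ⊆ K), and y^q = y is finite, and its cardinality, as an integer, equals q·(1 + χ(−a)). -/

import Mathlib

open Polynomial

lemma aux_rootset (q : ℕ) (hq : IsPrimePow q)
    (F : Type*) [Field F] [Fintype F] (hF : Fintype.card F = q)
    (K : Type*) [Field K] [Algebra F K] [IsAlgClosure F K] (a : F) :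
    {x : K | x ^ q + algebraMap F K a = x}.Finite ∧
      Nat.card {x : K | x ^ q + algebraMap F K a = x} = q := by
  haveI : IsAlgClosed K := IsAlgClosure.isAlgClosed F
  have hq2 : 2 ≤ q := hq.two_le
  have hqF : (q : F) = 0 := by rw [← hF]; exact FiniteField.cast_card_eq_zero F
  set p : F[X] := X ^ q - X + C a with hp
  have hdeg : p.natDegree = q := by
    unfold p
    compute_degree!
    · simp [show ¬(1 = q) by omega, show ¬(q = 0) by omega]
    · omega
  have hsep : p.Separable := by
    rw [Polynomial.separable_def]
    have hder : p.derivative = -1 := by simp [hp, derivative_X_pow, hqF]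
    rw [hder]
    exact (isCoprime_one_right).neg_right
  have hcardA : Fintype.card (p.rootSet K) = q := by
    rw [Polynomial.card_rootSet_eq_natDegree hsep (IsAlgClosed.splits (p.map (algebraMap F K))), hdeg]
  have hmem : {x : K | x ^ q + algebraMap F K a = x} = p.rootSet K := by
    ext x
    rw [Set.mem_setOf_eq, Polynomial.mem_rootSet]
    constructor
    · intro h
      refine ⟨fun h0 => by simp [h0] at hdeg; omega, ?_⟩
      simp only [hp, map_add, map_sub, aeval_X_pow, aeval_X, aeval_C]
      linear_combination h
    · rintro ⟨-, h⟩
      simp only [hp, map_add, map_sub, aeval_X_pow, aeval_X, aeval_C] at h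
      linear_combination h
  rw [hmem]
  exact ⟨(p.rootSet K).toFinite, by rw [Nat.card_eq_fintype_card, hcardA]⟩

lemma aux_fixed (q : ℕ) (hq : IsPrimePow q)
    (F : Type*) [Field F] [Fintype F] (hF : Fintype.card F = q)
    (K : Type*) [Field K] [Algebra F K] [IsAlgClosure F K] (z : K) :
    z ^ q = z ↔ z ∈ Set.range (algebraMap F K) := by
  have h0 := aux_rootset q hq F hF K 0
  simp only [map_zero, add_zero] at h0
  have hsub : Set.range (algebraMap F K) ⊆ {x : K | x ^ q = x} := by
    rintro - ⟨b, rfl⟩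
    show (algebraMap F K b) ^ q = algebraMap F K b
    rw [← map_pow, ← hF, FiniteField.pow_card]
  have hcardr : (Set.range (algebraMap F K)).ncard = q := by
    rw [← Set.image_univ, Set.ncard_image_of_injective _ (algebraMap F K).injective,
      Set.ncard_univ, Nat.card_eq_fintype_card, hF]
  have heq : Set.range (algebraMap F K) = {x : K | x ^ q = x} := by
    apply Set.eq_of_subset_of_ncard_le hsub _ h0.1
    rw [hcardr, ← Nat.card_coe_set_eq, h0.2]
  simp only [heq, Set.mem_setOf_eq]

/-- Fixed-point count for translation-composed-with-Frobenius on the affine curve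
`y² = x^q − x` over an algebraic closure of the field `F` with `q` elements:
the number of fixed points is `q·(1 + χ(−a))`, `χ` the quadratic character of `F`. -/
theorem frobenius_translation_fixed_points (q : ℕ) (hq : IsPrimePow q) (hodd : Odd q)
    (F : Type*) [Field F] [Fintype F] [DecidableEq F] (hF : Fintype.card F = q)
    (K : Type*) [Field K] [Algebra F K] [IsAlgClosure F K] (a : F) :
    {xy : K × K | xy.2 ^ 2 = xy.1 ^ q - xy.1 ∧
        xy.1 ^ q + algebraMap F K a = xy.1 ∧ xy.2 ^ q = xy.2}.Finite ∧
      (Nat.card {xy : K × K | xy.2 ^ 2 = xy.1 ^ q - xy.1 ∧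
          xy.1 ^ q + algebraMap F K a = xy.1 ∧ xy.2 ^ q = xy.2} : ℤ)
        = q * (1 + quadraticChar F (-a)) := by
  set A : Set K := {x : K | x ^ q + algebraMap F K a = x} with hA
  set B : Set K := {y : K | y ^ 2 = - algebraMap F K a ∧ y ^ q = y} with hB
  have hprod : {xy : K × K | xy.2 ^ 2 = xy.1 ^ q - xy.1 ∧
      xy.1 ^ q + algebraMap F K a = xy.1 ∧ xy.2 ^ q = xy.2} = A ×ˢ B := by
    ext ⟨x, y⟩
    simp only [Set.mem_setOf_eq, Set.mem_prod, hA, hB]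
    constructor
    · rintro ⟨h1, h2, h3⟩
      exact ⟨h2, by linear_combination h1 + h2, h3⟩
    · rintro ⟨h2, h1, h3⟩
      exact ⟨by linear_combination h1 - h2, h2, h3⟩
  have hAfin := aux_rootset q hq F hF K a
  have hBeq : B = algebraMap F K '' {b : F | b ^ 2 = -a} := by
    ext y
    simp only [hB, Set.mem_setOf_eq, Set.mem_image]
    constructor
    · rintro ⟨h1, h2⟩
      obtain ⟨b, rfl⟩ := (aux_fixed q hq F hF K y).mp h2
      refine ⟨b, ?_, rfl⟩
      apply (algebraMap F K).injective
      rw [map_pow, map_neg, h1]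
    · rintro ⟨b, hb, rfl⟩
      refine ⟨by rw [← map_pow, hb, map_neg], ?_⟩
      exact (aux_fixed q hq F hF K _).mpr ⟨b, rfl⟩
  have hBfin : B.Finite := by
    rw [hBeq]; exact (Set.toFinite _).image _
  have hBcard : Nat.card B = ({x : F | x ^ 2 = -a}.toFinset).card := by
    rw [hBeq, Nat.card_image_of_injective (algebraMap F K).injective,
      Nat.card_coe_set_eq, Set.ncard_eq_toFinset_card']
  have hchar2 : ringChar F ≠ 2 := by
    intro h2
    have : ringChar F ∣ q := ringChar.dvd (by rw [← hF]; exact FiniteField.cast_card_eq_zero F)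
    rw [h2] at this
    exact (Nat.not_even_iff_odd.mpr hodd) (even_iff_two_dvd.mpr this)
  have hsq := quadraticChar_card_sqrts hchar2 (-a)
  constructor
  · rw [hprod]; exact hAfin.1.prod hBfin
  · rw [hprod]
    have : Nat.card (A ×ˢ B : Set (K × K)) = Nat.card A * Nat.card B := by
      rw [Nat.card_congr (Equiv.Set.prod A B), Nat.card_prod]
    rw [this, hAfin.2, hBcard]
    push_cast
    rw [hsq]
    ring
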